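/- Conditional-score identity: suppose (x_0, y, x_t) has joint density p(x_0)·p(y|x_0)·p(x_t|x_0) with p(x_t|x_0) = N(x_t; α_t x_0, σ_t² I). Then E[x_0 | x_t, y] = E[x_0 | x_t] + (σ_t²/α_t)·∇_{x_t} log p(y|x_t), where p(y|x_t) = ∫ p(y|x_0) p(x_0|x_t) dx_0. -/

import Mathlib

open MeasureTheory

/-- Conditional-score identity:
`E[x_0 | x_t, y] = E[x_0 | x_t] + (σ_t²/α_t)·∇_{x_t} log p(y|x_t)`,
where `K` is the Gaussian transition kernel `p(x_t|x_0) = N(x_t; α_t x_0, σ_t² I)`,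
`L x_0 = p(y|x_0)` (with `y` fixed), `P x_t = p(x_t)` and `G x_t = p(y, x_t)`,
so that `p(y|x_t) = G x_t / P x_t`. -/
theorem stmt_9 {n : ℕ} (αt σt : ℝ) (hα : αt ≠ 0) (hσ : 0 < σt)
    (p0 L : EuclideanSpace ℝ (Fin n) → ℝ)
    (hp0 : ∀ z, 0 ≤ p0 z) (hL : ∀ z, 0 ≤ L z)
    (K : EuclideanSpace ℝ (Fin n) → EuclideanSpace ℝ (Fin n) → ℝ)
    (hK : ∀ xt x0, K xt x0 =
      (2 * Real.pi * σt ^ 2) ^ (-(n : ℝ) / 2) *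
        Real.exp (-‖xt - αt • x0‖ ^ 2 / (2 * σt ^ 2)))
    (G P : EuclideanSpace ℝ (Fin n) → ℝ)
    (hG : ∀ u, G u = ∫ x0, L x0 * K u x0 * p0 x0)
    (hP : ∀ u, P u = ∫ x0, K u x0 * p0 x0)
    (xt : EuclideanSpace ℝ (Fin n)) (hGpos : 0 < G xt) (hPpos : 0 < P xt)
    -- differentiation under the integral sign is valid for both integrals:
    (hGgrad : HasGradientAt G ((σt ^ 2)⁻¹ •
      ((∫ x0, (L x0 * K xt x0 * p0 x0) • (αt • x0)) - G xt • xt)) xt)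
    (hPgrad : HasGradientAt P ((σt ^ 2)⁻¹ •
      ((∫ x0, (K xt x0 * p0 x0) • (αt • x0)) - P xt • xt)) xt)
    (hintG : Integrable (fun x0 => (L x0 * K xt x0 * p0 x0) • x0))
    (hintP : Integrable (fun x0 => (K xt x0 * p0 x0) • x0)) :
    (G xt)⁻¹ • (∫ x0, (L x0 * K xt x0 * p0 x0) • x0)
      = (P xt)⁻¹ • (∫ x0, (K xt x0 * p0 x0) • x0)
        + (σt ^ 2 / αt) • gradient (fun u => Real.log (G u / P u)) xt := by

  set IG := ∫ x0, (L x0 * K xt x0 * p0 x0) • x0 with hIGdef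
  set IP := ∫ x0, (K xt x0 * p0 x0) • x0 with hIPdef
  have hIG' : (∫ x0, (L x0 * K xt x0 * p0 x0) • (αt • x0)) = αt • IG := by
    rw [hIGdef, ← integral_smul]
    exact integral_congr_ae (Filter.Eventually.of_forall fun x0 => smul_comm _ _ _)
  have hIP' : (∫ x0, (K xt x0 * p0 x0) • (αt • x0)) = αt • IP := by
    rw [hIPdef, ← integral_smul]
    exact integral_congr_ae (Filter.Eventually.of_forall fun x0 => smul_comm _ _ _)
  rw [hIG'] at hGgrad
  rw [hIP'] at hPgrad
  -- gradients of log ∘ G and log ∘ P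
  have hlogG : HasGradientAt (fun u => Real.log (G u))
      ((G xt)⁻¹ • ((σt ^ 2)⁻¹ • (αt • IG - G xt • xt))) xt := by
    have h := (Real.hasDerivAt_log hGpos.ne').comp_hasFDerivAt xt hGgrad.hasFDerivAt
    rw [hasGradientAt_iff_hasFDerivAt]
    convert h using 1
    · rfl
    · rfl
    ext v
    simp [InnerProductSpace.toDual_apply_apply, inner_smul_left]
  have hlogP : HasGradientAt (fun u => Real.log (P u))
      ((P xt)⁻¹ • ((σt ^ 2)⁻¹ • (αt • IP - P xt • xt))) xt := by
    have h := (Real.hasDerivAt_log hPpos.ne').comp_hasFDerivAt xt hPgrad.hasFDerivAt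
    rw [hasGradientAt_iff_hasFDerivAt]
    convert h using 1
    · rfl
    · rfl
    ext v
    simp [InnerProductSpace.toDual_apply_apply, inner_smul_left]
  have hsub : HasGradientAt (fun u => Real.log (G u) - Real.log (P u))
      ((G xt)⁻¹ • ((σt ^ 2)⁻¹ • (αt • IG - G xt • xt))
        - (P xt)⁻¹ • ((σt ^ 2)⁻¹ • (αt • IP - P xt • xt))) xt := by
    rw [hasGradientAt_iff_hasFDerivAt] at hlogG hlogP ⊢
    have := hlogG.sub hlogP
    convert this using 1
    · rfl
    · rfl
    · rfl
    ext v
    simp [InnerProductSpace.toDual_apply_apply, inner_sub_left]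
  -- near xt, log (G u / P u) = log (G u) - log (P u)
  have hGcont : ContinuousAt G xt := hGgrad.hasFDerivAt.continuousAt
  have hPcont : ContinuousAt P xt := hPgrad.hasFDerivAt.continuousAt
  have hev : (fun u => Real.log (G u / P u)) =ᶠ[nhds xt]
      (fun u => Real.log (G u) - Real.log (P u)) := by
    have h1 : ∀ᶠ u in nhds xt, 0 < G u := hGcont.eventually (eventually_gt_nhds hGpos)
    have h2 : ∀ᶠ u in nhds xt, 0 < P u := hPcont.eventually (eventually_gt_nhds hPpos)
    filter_upwards [h1, h2] with u hu1 hu2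
    rw [Real.log_div hu1.ne' hu2.ne']
  have hmain : HasGradientAt (fun u => Real.log (G u / P u))
      ((G xt)⁻¹ • ((σt ^ 2)⁻¹ • (αt • IG - G xt • xt))
        - (P xt)⁻¹ • ((σt ^ 2)⁻¹ • (αt • IP - P xt • xt))) xt :=
    hsub.congr_of_eventuallyEq hev
  rw [hmain.gradient]
  have hσ2 : (σt : ℝ) ^ 2 ≠ 0 := pow_ne_zero 2 hσ.ne'
  have hGne : G xt ≠ 0 := hGpos.ne'
  have hPne : P xt ≠ 0 := hPpos.ne'
  rw [smul_sub, smul_smul, smul_smul, smul_smul, smul_smul]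
  rw [smul_sub, smul_sub, smul_smul, smul_smul, smul_smul, smul_smul]
  have e1 : σt ^ 2 / αt * (G xt)⁻¹ * (σt ^ 2)⁻¹ * αt = (G xt)⁻¹ := by
    field_simp
  have e2 : σt ^ 2 / αt * (G xt)⁻¹ * (σt ^ 2)⁻¹ * G xt = αt⁻¹ := by
    field_simp
  have e3 : σt ^ 2 / αt * (P xt)⁻¹ * (σt ^ 2)⁻¹ * αt = (P xt)⁻¹ := by
    field_simp
  have e4 : σt ^ 2 / αt * (P xt)⁻¹ * (σt ^ 2)⁻¹ * P xt = αt⁻¹ := by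
    field_simp
  rw [e1, e2, e3, e4]
  abel
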